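/- Let C be a triangulated category with a weight structure w. Fix a morphism u : M_- → M_+ with M_- ∈ C_{w≤0} and M_+ ∈ C_{w≥0}. Suppose given a weight filtration A → M_- →π₀ G_- → A[1] of M_- avoiding weight -1 (A ∈ C_{w≤-2}, G_- ∈ C_{w≥0}, hence G_- ∈ C_{w=0}), and a weight filtration G_+ →i₀ M_+ → B → G_+[1] of M_+ avoiding weight 1 (G_+ ∈ C_{w≤0}, hence G_+ ∈ C_{w=0}, B ∈ C_{w≥2}). Then the map Hom_C(G_-, G_+) → Hom_C(M_-, M_+) given by g ↦ i₀ ∘ g ∘ π₀ is a bijection. In particular, there is a unique morphism φ : G_- → G_+ with i₀ ∘ φ ∘ π₀ = u; if moreover there is a distinguished triangle C₀ → M_- →u M_+ → C₀[1] with C₀ without weights -1 and 0, then this unique φ is an isomorphism. -/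

import Mathlib

open CategoryTheory CategoryTheory.Limits CategoryTheory.Pretriangulated

universe v u

/-- The shift `S[n]` of a class of objects `S`: the objects isomorphic to `A⟦n⟧`
for some `A ∈ S`. -/
def shiftedSet {C : Type u} [Category.{v} C] [HasShift C ℤ] (S : Set C) (n : ℤ) : Set C :=
  {X | ∃ A ∈ S, Nonempty (X ≅ A⟦n⟧)}

/-- A weight structure on a pretriangulated category `C`, following Bondarko. -/
structure WeightStructure (C : Type u) [Category.{v} C] [Preadditive C] [HasZeroObject C]
    [HasShift C ℤ] [∀ n : ℤ, (shiftFunctor C n).Additive] [Pretriangulated C] where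
  /-- the objects of weights `≤ 0` -/
  le : Set C
  /-- the objects of weights `≥ 0` -/
  ge : Set C
  /-- `C_{w ≤ 0}` is closed under retracts -/
  retract_le : ∀ (X M : C) (i : X ⟶ M) (r : M ⟶ X), i ≫ r = 𝟙 X → M ∈ le → X ∈ le
  /-- `C_{w ≥ 0}` is closed under retracts -/
  retract_ge : ∀ (X M : C) (i : X ⟶ M) (r : M ⟶ X), i ≫ r = 𝟙 X → M ∈ ge → X ∈ ge
  /-- `C_{w ≤ 0} ⊆ C_{w ≤ 1}` -/
  le_shift : le ⊆ shiftedSet le 1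
  /-- `C_{w ≥ 1} ⊆ C_{w ≥ 0}` -/
  ge_shift : shiftedSet ge 1 ⊆ ge
  /-- orthogonality -/
  orth : ∀ (M N : C), M ∈ le → N ∈ shiftedSet ge 1 → ∀ f : M ⟶ N, f = 0
  /-- existence of weight filtrations -/
  exists_wf : ∀ M : C, ∃ (A B : C) (a : A ⟶ M) (b : M ⟶ B) (δ : B ⟶ A⟦(1:ℤ)⟧),
    Triangle.mk a b δ ∈ (distTriang C) ∧ A ∈ le ∧ B ∈ shiftedSet ge 1

namespace WeightStructure

variable {C : Type u} [Category.{v} C] [Preadditive C] [HasZeroObject C]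
  [HasShift C ℤ] [∀ n : ℤ, (shiftFunctor C n).Additive] [Pretriangulated C]

/-- `C_{w ≤ n} := C_{w ≤ 0}[n]`. -/
def wLE (w : WeightStructure C) (n : ℤ) : Set C := shiftedSet w.le n

/-- `C_{w ≥ n} := C_{w ≥ 0}[n]`. -/
def wGE (w : WeightStructure C) (n : ℤ) : Set C := shiftedSet w.ge n

/-- The heart `C_{w = 0} := C_{w ≤ 0} ∩ C_{w ≥ 0}`. -/
def heart (w : WeightStructure C) : Set C := w.le ∩ w.ge

/-- An object `M` is without weights `m, …, n` if it admits a weight filtration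
avoiding these weights. -/
def WithoutWeights (w : WeightStructure C) (m n : ℤ) (M : C) : Prop :=
  ∃ (A B : C) (a : A ⟶ M) (b : M ⟶ B) (δ : B ⟶ A⟦(1:ℤ)⟧),
    Triangle.mk a b δ ∈ (distTriang C) ∧ A ∈ w.wLE (m - 1) ∧ B ∈ w.wGE (n + 1)

end WeightStructure

set_option linter.unusedSectionVars false
namespace WeightStructure

variable {C : Type u} [Category.{v} C] [Preadditive C] [HasZeroObject C]
  [HasShift C ℤ] [∀ n : ℤ, (shiftFunctor C n).Additive] [Pretriangulated C]
  (w : WeightStructure C)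

lemma shiftedSet_of_iso {S : Set C} {X Y : C} (e : X ≅ Y) {n : ℤ}
    (h : Y ∈ shiftedSet S n) : X ∈ shiftedSet S n := by
  obtain ⟨P, hP, ⟨e'⟩⟩ := h
  exact ⟨P, hP, ⟨e.trans e'⟩⟩

lemma shiftedSet_shift {S : Set C} {X : C} {m : ℤ} (h : X ∈ shiftedSet S m)
    (k n : ℤ) (hn : m + k = n) : X⟦k⟧ ∈ shiftedSet S n := by
  obtain ⟨P, hP, ⟨e⟩⟩ := h
  exact ⟨P, hP, ⟨(shiftFunctor C k).mapIso e ≪≫ ((shiftFunctorAdd' C m k n hn).app P).symm⟩⟩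

lemma mem_shiftedSet_zero {S : Set C} {X : C} (h : X ∈ S) : X ∈ shiftedSet S 0 :=
  ⟨X, h, ⟨((shiftFunctorZero C ℤ).app X).symm⟩⟩

lemma mem_le_of_iso {X Y : C} (e : X ≅ Y) (h : Y ∈ w.le) : X ∈ w.le :=
  w.retract_le X Y e.hom e.inv e.hom_inv_id h

lemma mem_ge_of_iso {X Y : C} (e : X ≅ Y) (h : Y ∈ w.ge) : X ∈ w.ge :=
  w.retract_ge X Y e.hom e.inv e.hom_inv_id h

lemma wLE_shift {X : C} {m : ℤ} (h : X ∈ w.wLE m) (k n : ℤ) (hn : m + k = n) :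
    X⟦k⟧ ∈ w.wLE n := shiftedSet_shift h k n hn

lemma wGE_shift {X : C} {m : ℤ} (h : X ∈ w.wGE m) (k n : ℤ) (hn : m + k = n) :
    X⟦k⟧ ∈ w.wGE n := shiftedSet_shift h k n hn

lemma le_mem_wLE_zero {X : C} (h : X ∈ w.le) : X ∈ w.wLE 0 := mem_shiftedSet_zero h

lemma ge_mem_wGE_zero {X : C} (h : X ∈ w.ge) : X ∈ w.wGE 0 := mem_shiftedSet_zero h

lemma mem_le_of_wLE_zero {X : C} (h : X ∈ w.wLE 0) : X ∈ w.le := by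
  obtain ⟨P, hP, ⟨e⟩⟩ := h
  exact w.mem_le_of_iso (e ≪≫ (shiftFunctorZero C ℤ).app P) hP

lemma mem_ge_of_wGE_zero {X : C} (h : X ∈ w.wGE 0) : X ∈ w.ge := by
  obtain ⟨P, hP, ⟨e⟩⟩ := h
  exact w.mem_ge_of_iso (e ≪≫ (shiftFunctorZero C ℤ).app P) hP

lemma wLE_succ {X : C} {m : ℤ} (h : X ∈ w.wLE m) : X ∈ w.wLE (m + 1) := by
  obtain ⟨P, hP, ⟨e⟩⟩ := h
  obtain ⟨P', hP', ⟨e'⟩⟩ := w.le_shift hP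
  exact ⟨P', hP', ⟨e ≪≫ (shiftFunctor C m).mapIso e' ≪≫
    ((shiftFunctorAdd' C 1 m (m + 1) (by ring)).app P').symm⟩⟩

lemma wGE_pred {X : C} {n : ℤ} (h : X ∈ w.wGE n) : X ∈ w.wGE (n - 1) := by
  obtain ⟨Q, hQ, ⟨e⟩⟩ := h
  refine ⟨Q⟦(1:ℤ)⟧, w.ge_shift ⟨Q, hQ, ⟨Iso.refl _⟩⟩,
    ⟨e ≪≫ (shiftFunctorAdd' C 1 (n - 1) n (by ring)).app Q⟩⟩

lemma wLE_add_nat {X : C} {m : ℤ} (h : X ∈ w.wLE m) : ∀ k : ℕ, X ∈ w.wLE (m + k)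
  | 0 => by simpa using h
  | (k+1) => by
    have := w.wLE_succ (wLE_add_nat h k)
    push_cast
    rw [← add_assoc]
    exact_mod_cast this

lemma wGE_sub_nat {X : C} {n : ℤ} (h : X ∈ w.wGE n) : ∀ k : ℕ, X ∈ w.wGE (n - k)
  | 0 => by simpa using h
  | (k+1) => by
    have := w.wGE_pred (wGE_sub_nat h k)
    push_cast
    rw [← sub_sub]
    exact_mod_cast this

lemma wLE_le {X : C} {m n : ℤ} (h : X ∈ w.wLE m) (hmn : m ≤ n) : X ∈ w.wLE n := by
  obtain ⟨k, rfl⟩ := Int.le.dest hmn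
  exact w.wLE_add_nat h k

lemma wGE_ge {X : C} {m n : ℤ} (h : X ∈ w.wGE n) (hmn : m ≤ n) : X ∈ w.wGE m := by
  obtain ⟨k, hk⟩ := Int.le.dest hmn
  rw [show m = n - k by omega]
  exact w.wGE_sub_nat h k

lemma hom_zero {X Y : C} {m n : ℤ} (hX : X ∈ w.wLE m) (hY : Y ∈ w.wGE n) (h : m < n)
    (f : X ⟶ Y) : f = 0 := by
  replace hX := w.wLE_le hX (show m ≤ n - 1 by omega)
  obtain ⟨P, hP, ⟨e₁⟩⟩ := hX
  obtain ⟨Q, hQ, ⟨e₂⟩⟩ := hY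
  have hQ1 : Q⟦(1:ℤ)⟧ ∈ shiftedSet w.ge 1 := ⟨Q, hQ, ⟨Iso.refl _⟩⟩
  set e₃ : Q⟦n⟧ ≅ (Q⟦(1:ℤ)⟧)⟦n - 1⟧ := (shiftFunctorAdd' C 1 (n - 1) n (by ring)).app Q
  set g : P⟦n - 1⟧ ⟶ (Q⟦(1:ℤ)⟧)⟦n - 1⟧ := e₁.inv ≫ f ≫ e₂.hom ≫ e₃.hom with hg
  obtain ⟨g₀, hg₀⟩ := (shiftFunctor C (n - 1)).map_surjective g
  have hz : g₀ = 0 := w.orth _ _ hP hQ1 g₀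
  have : g = 0 := by rw [← hg₀, hz, Functor.map_zero]
  have hf : f = e₁.hom ≫ g ≫ e₃.inv ≫ e₂.inv := by
    rw [hg]
    simp
  rw [hf, this]
  simp

lemma mem_le_of_orth (Y : C) (h : ∀ (N : C) (f : Y ⟶ N), N ∈ shiftedSet w.ge 1 → f = 0) :
    Y ∈ w.le := by
  obtain ⟨A', B', f, g, δ, hT, hA', hB'⟩ := w.exists_wf Y
  obtain ⟨s, hs⟩ := Triangle.coyoneda_exact₂ _ hT (𝟙 Y)
    (by exact (Category.id_comp _).trans (h _ g hB'))
  exact w.retract_le Y A' s f hs.symm hA'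

lemma mem_ge_of_orth (Y : C) (h : ∀ (P : C) (f : P ⟶ Y), P ∈ w.wLE (-1) → f = 0) :
    Y ∈ w.ge := by
  obtain ⟨A', B', f, g, δ, hT, hA', hB'⟩ := w.exists_wf (Y⟦(1:ℤ)⟧)
  have hT3 : (Triangle.mk f g δ).invRotate.invRotate.invRotate ∈ distTriang C :=
    inv_rot_of_distTriang _ (inv_rot_of_distTriang _ (inv_rot_of_distTriang _ hT))
  set T3 := (Triangle.mk f g δ).invRotate.invRotate.invRotate with hT3def
  let e : ((Y⟦(1:ℤ)⟧)⟦(-1:ℤ)⟧ : C) ≅ Y := (shiftFunctorCompIsoId C 1 (-1) (by ring)).app Y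
  have hA1 : (A'⟦(-1:ℤ)⟧ : C) ∈ w.wLE (-1) :=
    shiftedSet_shift (mem_shiftedSet_zero hA') (-1) (-1) (by ring)
  have hmor₁ : T3.mor₁ = 0 := by
    have h1 : T3.mor₁ ≫ e.hom = 0 := h _ _ hA1
    calc T3.mor₁ = ((T3.mor₁ ≫ e.hom) ≫ e.inv : T3.obj₁ ⟶ T3.obj₂) := by exact ((Category.assoc _ _ _).trans ((whisker_eq T3.mor₁ e.hom_inv_id).trans (Category.comp_id _))).symm
    _ = 0 := by rw [h1]; exact zero_comp
  obtain ⟨r, hr⟩ := Triangle.yoneda_exact₂ _ hT3 (𝟙 T3.obj₂) (by rw [hmor₁]; simp)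
  have hB1 : (B'⟦(-1:ℤ)⟧ : C) ∈ w.ge :=
    w.mem_ge_of_wGE_zero (shiftedSet_shift hB' (-1) 0 (by ring))
  have hge : T3.obj₂ ∈ w.ge := w.retract_ge _ _ T3.mor₂ r hr.symm hB1
  exact w.mem_ge_of_iso e.symm hge


end WeightStructure

open CategoryTheory.Preadditive in
/-- Given weight filtrations of `M₋` avoiding weight `-1` (with weight-zero quotient
`π₀ : M₋ ⟶ G₋`) and of `M₊` avoiding weight `1` (with weight-zero subobject
`i₀ : G₊ ⟶ M₊`), the map `g ↦ i₀ ∘ g ∘ π₀` is a bijection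
`Hom(G₋, G₊) ≃ Hom(M₋, M₊)`; in particular there is a unique `φ` with
`i₀ ∘ φ ∘ π₀ = u`, and if some cone `C₀[1]` of `u` has `C₀` without weights `-1` and `0`,
this unique `φ` is an isomorphism. -/
theorem hom_bijective_and_iso
    {C : Type u} [Category.{v} C] [Preadditive C] [HasZeroObject C]
    [HasShift C ℤ] [∀ n : ℤ, (shiftFunctor C n).Additive] [Pretriangulated C]
    [IsTriangulated C]
    (w : WeightStructure C) (Mm Mp : C) (u : Mm ⟶ Mp)
    (hMm : Mm ∈ w.le) (hMp : Mp ∈ w.ge)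
    (A Gm : C) (a : A ⟶ Mm) (π₀ : Mm ⟶ Gm) (δm : Gm ⟶ A⟦(1:ℤ)⟧)
    (hTm : Triangle.mk a π₀ δm ∈ distTriang C)
    (hA : A ∈ w.wLE (-2)) (hGm : Gm ∈ w.ge)
    (Gp B : C) (i₀ : Gp ⟶ Mp) (b : Mp ⟶ B) (δp : B ⟶ Gp⟦(1:ℤ)⟧)
    (hTp : Triangle.mk i₀ b δp ∈ distTriang C)
    (hGp : Gp ∈ w.le) (hB : B ∈ w.wGE 2) :
    Function.Bijective (fun g : Gm ⟶ Gp => π₀ ≫ g ≫ i₀) ∧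
    (∃! φ : Gm ⟶ Gp, π₀ ≫ φ ≫ i₀ = u) ∧
    (∀ (C₀ : C) (vm : C₀ ⟶ Mm) (vp : Mp ⟶ C₀⟦(1:ℤ)⟧),
      Triangle.mk vm u vp ∈ (distTriang C) → w.WithoutWeights (-1) 0 C₀ →
      ∀ φ : Gm ⟶ Gp, π₀ ≫ φ ≫ i₀ = u → IsIso φ) := by
  have hT1r : Triangle.mk π₀ δm (-(a⟦(1:ℤ)⟧')) ∈ distTriang C := rot_of_distTriang _ hTm
  have hT2inv : (Triangle.mk i₀ b δp).invRotate ∈ distTriang C := inv_rot_of_distTriang _ hTp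
  have hA1 : (A⟦(1:ℤ)⟧ : C) ∈ w.wLE (-1) := w.wLE_shift hA 1 (-1) (by ring)
  have hBm1 : ((B⟦(-1:ℤ)⟧ : C)) ∈ w.wGE 1 := w.wGE_shift hB (-1) 1 (by ring)
  have hMm0 : Mm ∈ w.wLE 0 := w.le_mem_wLE_zero hMm
  have hMp0 : Mp ∈ w.wGE 0 := w.ge_mem_wGE_zero hMp
  have hGm0ge : Gm ∈ w.wGE 0 := w.ge_mem_wGE_zero hGm
  have hGmle : Gm ∈ w.le := by
    apply w.mem_le_of_orth
    intro N f hN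
    have h0 : π₀ ≫ f = 0 := w.hom_zero hMm0 hN (by norm_num) (π₀ ≫ f)
    obtain ⟨g, hg⟩ := Triangle.yoneda_exact₂ _ hT1r f h0
    rw [hg, w.hom_zero hA1 hN (by norm_num) g]; exact comp_zero
  have hGpge : Gp ∈ w.ge := by
    apply w.mem_ge_of_orth
    intro P f hP
    have h0 : f ≫ i₀ = 0 := w.hom_zero hP hMp0 (by norm_num) (f ≫ i₀)
    obtain ⟨g, hg⟩ := Triangle.coyoneda_exact₂ _ hT2inv f h0
    rw [hg, w.hom_zero hP hBm1 (by norm_num) g]; exact zero_comp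
  have hGm0 : Gm ∈ w.wLE 0 := w.le_mem_wLE_zero hGmle
  have hGp0le : Gp ∈ w.wLE 0 := w.le_mem_wLE_zero hGp
  have hGp0ge : Gp ∈ w.wGE 0 := w.ge_mem_wGE_zero hGpge
  have cancel_i₀ : ∀ (X : C), X ∈ w.wLE 0 → ∀ (x : X ⟶ Gp), x ≫ i₀ = 0 → x = 0 := by
    intro X hX x hx
    obtain ⟨g, hg⟩ := Triangle.coyoneda_exact₂ _ hT2inv x hx
    rw [hg, w.hom_zero hX hBm1 (by norm_num) g]; exact zero_comp
  have cancel_π₀ : ∀ (Y : C), Y ∈ w.wGE 0 → ∀ (y : Gm ⟶ Y), π₀ ≫ y = 0 → y = 0 := by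
    intro Y hY y hy
    obtain ⟨g, hg⟩ := Triangle.yoneda_exact₂ _ hT1r y hy
    rw [hg, w.hom_zero hA1 hY (by norm_num) g]; exact comp_zero
  have hinj : Function.Injective (fun g : Gm ⟶ Gp => π₀ ≫ g ≫ i₀) := by
    intro g₁ g₂ h12
    simp only at h12
    have hd : π₀ ≫ ((g₁ - g₂) ≫ i₀) = 0 := by
      simp only [sub_comp, comp_sub]
      rw [h12, sub_self]
    have h1 : (g₁ - g₂) ≫ i₀ = 0 := cancel_π₀ _ hMp0 _ hd
    have h2 : g₁ - g₂ = 0 := cancel_i₀ _ hGm0 _ h1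
    exact sub_eq_zero.mp h2
  have hsurj : Function.Surjective (fun g : Gm ⟶ Gp => π₀ ≫ g ≫ i₀) := by
    intro f
    have h0 : f ≫ b = 0 := w.hom_zero hMm0 hB (by norm_num) (f ≫ b)
    have he' : ∃ e : Mm ⟶ Gp, f = e ≫ i₀ := Triangle.coyoneda_exact₂ _ hTp f h0
    obtain ⟨e, he⟩ := he'
    have h1 : a ≫ e = 0 := w.hom_zero hA hGp0ge (by norm_num) (a ≫ e)
    have hg' : ∃ g : Gm ⟶ Gp, e = π₀ ≫ g := Triangle.yoneda_exact₂ _ hTm e h1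
    obtain ⟨g, hg⟩ := hg'
    refine ⟨g, ?_⟩
    show π₀ ≫ g ≫ i₀ = f
    rw [he, hg, Category.assoc]
  refine ⟨⟨hinj, hsurj⟩, ?_, ?_⟩
  · obtain ⟨φ, hφ⟩ := hsurj u
    have hφ' : π₀ ≫ φ ≫ i₀ = u := hφ
    refine ⟨φ, hφ', fun ψ hψ => hinj ?_⟩
    show π₀ ≫ ψ ≫ i₀ = π₀ ≫ φ ≫ i₀
    rw [hψ, hφ']
  · intro C₀ vm vp hT3 hWW φ hφ
    obtain ⟨A₀, B₀, a₀, b₀, δ₀, hT4, hA₀', hB₀'⟩ := hWW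
    have hA₀ : A₀ ∈ w.wLE (-2) := by
      have h : (-1 : ℤ) - 1 = -2 := by norm_num
      rwa [h] at hA₀'
    have hB₀ : B₀ ∈ w.wGE 1 := by
      have h : (0 : ℤ) + 1 = 1 := by norm_num
      rwa [h] at hB₀'
    obtain ⟨D, p, q, hTD⟩ := distinguished_cocone_triangle (φ ≫ i₀)
    have hcomm : π₀ ≫ (φ ≫ i₀) = u := hφ
    have hT3r : Triangle.mk u vp (-(vm⟦(1:ℤ)⟧')) ∈ distTriang C := rot_of_distTriang _ hT3
    have O := Triangulated.someOctahedron hcomm hT1r hTD hT3r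
    have hT4r3 : Triangle.mk (-(a₀⟦(1:ℤ)⟧')) (-(b₀⟦(1:ℤ)⟧')) (-(δ₀⟦(1:ℤ)⟧')) ∈ distTriang C :=
      rot_of_distTriang _ (rot_of_distTriang _ (rot_of_distTriang _ hT4))
    have hT1r3 : Triangle.mk (-(a⟦(1:ℤ)⟧')) (-(π₀⟦(1:ℤ)⟧')) (-(δm⟦(1:ℤ)⟧')) ∈ distTriang C :=
      rot_of_distTriang _ (rot_of_distTriang _ (rot_of_distTriang _ hTm))
    have hT3r3 : Triangle.mk (-(vm⟦(1:ℤ)⟧')) (-(u⟦(1:ℤ)⟧')) (-(vp⟦(1:ℤ)⟧')) ∈ distTriang C :=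
      rot_of_distTriang _ (rot_of_distTriang _ (rot_of_distTriang _ hT3))
    have hA₀1 : (A₀⟦(1:ℤ)⟧ : C) ∈ w.wLE (-1) := w.wLE_shift hA₀ 1 (-1) (by ring)
    have hB₀1 : (B₀⟦(1:ℤ)⟧ : C) ∈ w.wGE 2 := w.wGE_shift hB₀ 1 2 (by ring)
    have hB₀1m1 : ((B₀⟦(1:ℤ)⟧)⟦(-1:ℤ)⟧ : C) ∈ w.wGE 1 := w.wGE_shift hB₀1 (-1) 1 (by ring)
    have hGm1m1 : ((Gm⟦(1:ℤ)⟧)⟦(-1:ℤ)⟧ : C) ∈ w.wGE 0 :=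
      w.wGE_shift (w.wGE_shift hGm0ge 1 1 (by ring)) (-1) 0 (by ring)
    have hMp1m1 : ((Mp⟦(1:ℤ)⟧)⟦(-1:ℤ)⟧ : C) ∈ w.wGE 0 :=
      w.wGE_shift (w.wGE_shift hMp0 1 1 (by ring)) (-1) 0 (by ring)
    have hm₁b : O.m₁ ≫ (-(b₀⟦(1:ℤ)⟧')) = 0 :=
      w.hom_zero hA1 hB₀1 (by norm_num) _
    have hEα : ∃ α : (A⟦(1:ℤ)⟧ : C) ⟶ A₀⟦(1:ℤ)⟧, O.m₁ = α ≫ (-(a₀⟦(1:ℤ)⟧')) :=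
      Triangle.coyoneda_exact₂ _ hT4r3 O.m₁ hm₁b
    obtain ⟨α, hα⟩ := hEα
    have hx : (a₀ ≫ vm) ≫ π₀ = 0 := w.hom_zero hA₀ hGm0ge (by norm_num) _
    have hx1 : ((a₀ ≫ vm)⟦(1:ℤ)⟧') ≫ (-(π₀⟦(1:ℤ)⟧')) = 0 := by
      rw [comp_neg, ← Functor.map_comp, hx, Functor.map_zero, neg_zero]
    have hEβ : ∃ β : (A₀⟦(1:ℤ)⟧ : C) ⟶ A⟦(1:ℤ)⟧,
        (a₀ ≫ vm)⟦(1:ℤ)⟧' = β ≫ (-(a⟦(1:ℤ)⟧')) :=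
      Triangle.coyoneda_exact₂ _ hT1r3 ((a₀ ≫ vm)⟦(1:ℤ)⟧') hx1
    obtain ⟨β, hβ⟩ := hEβ
    have hiii : O.m₁ ≫ vm⟦(1:ℤ)⟧' = a⟦(1:ℤ)⟧' := by
      have h2 : O.m₁ ≫ (-(vm⟦(1:ℤ)⟧')) = -(a⟦(1:ℤ)⟧') := O.comm₂
      rw [comp_neg] at h2
      exact neg_inj.mp h2
    have hβ' : β ≫ a⟦(1:ℤ)⟧' = -(a₀⟦(1:ℤ)⟧' ≫ vm⟦(1:ℤ)⟧') := by
      rw [comp_neg, Functor.map_comp] at hβ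
      rw [hβ, neg_neg]
    have hclaim : β ≫ O.m₁ = -(a₀⟦(1:ℤ)⟧') := by
      have hz : (β ≫ O.m₁ + a₀⟦(1:ℤ)⟧') ≫ (-(vm⟦(1:ℤ)⟧')) = 0 := by
        simp only [add_comp, comp_neg, Category.assoc, hiii]
        rw [hβ']; simp
      obtain ⟨g, hg⟩ := Triangle.coyoneda_exact₂ _ (inv_rot_of_distTriang _ hT3r3)
        (β ≫ O.m₁ + a₀⟦(1:ℤ)⟧') hz
      rw [w.hom_zero hA₀1 hMp1m1 (by norm_num) g] at hg
      replace hg := hg.trans zero_comp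
      exact eq_neg_of_add_eq_zero_left hg
    have hβα : β ≫ α = 𝟙 (A₀⟦(1:ℤ)⟧) := by
      have hz : (β ≫ α - 𝟙 (A₀⟦(1:ℤ)⟧)) ≫ (-(a₀⟦(1:ℤ)⟧')) = 0 := by
        rw [sub_comp, Category.assoc, ← hα, hclaim, Category.id_comp, sub_self]
      obtain ⟨g, hg⟩ := Triangle.coyoneda_exact₂ _ (inv_rot_of_distTriang _ hT4r3) _ hz
      rw [w.hom_zero hA₀1 hB₀1m1 (by norm_num) g] at hg
      replace hg := hg.trans zero_comp
      exact sub_eq_zero.mp hg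
    have hαa₀ : α ≫ a₀⟦(1:ℤ)⟧' = -O.m₁ := by
      rw [hα, comp_neg, neg_neg]
    have hαβ : α ≫ β = 𝟙 (A⟦(1:ℤ)⟧) := by
      have hz : (α ≫ β - 𝟙 (A⟦(1:ℤ)⟧)) ≫ (-(a⟦(1:ℤ)⟧')) = 0 := by
        rw [sub_comp, Category.assoc, comp_neg, hβ', neg_neg, ← Category.assoc, hαa₀,
          neg_comp, hiii, Category.id_comp, sub_self]
      obtain ⟨g, hg⟩ := Triangle.coyoneda_exact₂ _ (inv_rot_of_distTriang _ hT1r3) _ hz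
      rw [w.hom_zero hA1 hGm1m1 (by norm_num) g] at hg
      replace hg := hg.trans zero_comp
      exact sub_eq_zero.mp hg
    have : IsIso α := ⟨β, hαβ, hβα⟩
    have eT := isoTriangleOfIso₁₂ _ _ O.mem hT4r3 (@asIso _ _ _ _ α this) (Iso.refl _)
      (by dsimp; exact (Category.comp_id _).trans hα)
    have hD : D ∈ w.wGE 2 :=
      WeightStructure.shiftedSet_of_iso (Triangle.π₃.mapIso eT) hB₀1
    have hi₀p : i₀ ≫ p = 0 := w.hom_zero hGp0le hD (by norm_num) _
    have hEχ : ∃ χ : Gp ⟶ Gm, i₀ = χ ≫ (φ ≫ i₀) :=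
      Triangle.coyoneda_exact₂ _ hTD i₀ hi₀p
    obtain ⟨χ, hχ⟩ := hEχ
    have hχφ : χ ≫ φ = 𝟙 Gp := by
      have h0 : ((χ ≫ φ) - 𝟙 Gp) ≫ i₀ = 0 := by
        rw [sub_comp, Category.assoc, ← hχ, Category.id_comp, sub_self]
      exact sub_eq_zero.mp (cancel_i₀ _ hGp0le _ h0)
    have hφχ : φ ≫ χ = 𝟙 Gm := by
      have h0 : ((φ ≫ χ) - 𝟙 Gm) ≫ (φ ≫ i₀) = 0 := by
        rw [sub_comp, Category.assoc, ← hχ, Category.id_comp, sub_self]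
      obtain ⟨g, hg⟩ := Triangle.coyoneda_exact₂ _ (inv_rot_of_distTriang _ hTD) _ h0
      have hDm1 : (D⟦(-1:ℤ)⟧ : C) ∈ w.wGE 1 := w.wGE_shift hD (-1) 1 (by ring)
      rw [w.hom_zero hGm0 hDm1 (by norm_num) g] at hg
      replace hg := hg.trans zero_comp
      exact sub_eq_zero.mp hg
    exact ⟨χ, hφχ, hχφ⟩
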